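/- For σ ∈ Σ_n and 0 ≤ j ≤ n, let F̃_n^{n−j}(σ) = F_{j+1} ∘ ⋯ ∘ F_n(σ) and F̃_1^j(σ) = F_1 ∘ ⋯ ∘ F_1 (j times applied)(σ), where F_i deletes the i-th entry of one-line notation and standardizes. Then F̃_n^{n−j}(σ) = std(σ(1), …, σ(j)) and F̃_1^j(σ) = std(σ(j+1), …, σ(n)). Consequently the operadic Alexander–Whitney coproduct Δ(σ) = Σ_{j=0}^n F̃_n^{n−j}(σ) ⊗ F̃_1^j(σ) coincides with the Malvenuto–Reutenauer coproduct Δ_MR(σ) = Σ_{j=0}^n std(σ(1)⋯σ(j)) ⊗ std(σ(j+1)⋯σ(n)). -/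

import Mathlib

open scoped BigOperators TensorProduct

/-- Standardization of a word with distinct letters: the unique permutation
(in one-line notation) order-isomorphic to it: the entry at a position is
`1 +` the number of letters of the word smaller than the letter there. -/
def std (w : List ℕ) : List ℕ :=
  w.map (fun a => 1 + (w.filter (fun b => b < a)).length)

/-- The face map `Fᵢ` (1-indexed): delete the `i`-th entry of the one-line
notation and standardize. -/
def faceStd (i : ℕ) (w : List ℕ) : List ℕ := std (w.eraseIdx (i - 1))

/-- Top face: delete the last entry and standardize (`F_n` on `Σ_n`). -/
def topFace (w : List ℕ) : List ℕ := std (w.eraseIdx (w.length - 1))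

/-- Bottom face: delete the first entry and standardize (`F₁`). -/
def botFace (w : List ℕ) : List ℕ := std (w.eraseIdx 0)

lemma std_length (u : List ℕ) : (std u).length = u.length := by simp [std]

/-- The standardizing letter-map of a word `u`. -/
def stdFun (u : List ℕ) (a : ℕ) : ℕ := 1 + (u.filter (fun b => b < a)).length

lemma std_eq_map_stdFun (u : List ℕ) : std u = u.map (stdFun u) := rfl

lemma filter_lt_length_strict {u : List ℕ} {a b : ℕ} (hb : b ∈ u) (hba : b < a) :
    (u.filter (fun c => c < b)).length < (u.filter (fun c => c < a)).length := by
  induction u with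
  | nil => simp at hb
  | cons x t ih =>
    rcases List.mem_cons.1 hb with rfl | hbt
    · simp only [List.filter_cons]
      have h1 : ¬ (b < b) := lt_irrefl b
      simp only [h1, hba, decide_eq_true_eq, if_pos, if_neg, not_false_eq_true,
        decide_true]
      simp [h1, hba]
      have : (t.filter (fun c => c < b)).length ≤ (t.filter (fun c => c < a)).length := by
        have := List.monotone_filter_right t (p := fun c => decide (c < b))
          (q := fun c => decide (c < a)) (by
            intro c hc
            simp only [decide_eq_true_eq] at hc ⊢
            exact hc.trans hba)
        exact this.length_le
      omega
    · have hlt := ih hbt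
      simp only [List.filter_cons]
      by_cases hx : x < b
      · have hx' : x < a := hx.trans hba
        simp [hx, hx', List.length_cons]; omega
      · by_cases hx' : x < a <;> simp [hx, hx', List.length_cons] <;> omega

lemma filter_lt_length_mono {u : List ℕ} {a b : ℕ} (hab : a ≤ b) :
    (u.filter (fun c => c < a)).length ≤ (u.filter (fun c => c < b)).length := by
  refine List.Sublist.length_le (List.monotone_filter_right u ?_)
  intro c hc
  simp only [decide_eq_true_eq] at hc ⊢
  exact hc.trans_le hab

lemma stdFun_lt_iff {u : List ℕ} {a b : ℕ} (ha : a ∈ u) (hb : b ∈ u) :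
    stdFun u b < stdFun u a ↔ b < a := by
  constructor
  · intro h
    by_contra hba
    push_neg at hba
    have := filter_lt_length_mono (u := u) hba
    simp only [stdFun] at h
    omega
  · intro h
    have := filter_lt_length_strict hb h
    simp only [stdFun]
    omega

/-- `std` only depends on the relative order of the letters. -/
lemma std_map (u : List ℕ) (f : ℕ → ℕ)
    (hf : ∀ a ∈ u, ∀ b ∈ u, (f b < f a ↔ b < a)) : std (u.map f) = std u := by
  unfold std
  rw [List.map_map]
  refine List.map_congr_left ?_
  intro a ha
  simp only [Function.comp_apply]
  congr 1
  rw [List.filter_map]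
  rw [List.length_map]
  congr 1
  refine List.filter_congr ?_
  intro b hb
  simp only [Function.comp_apply, decide_eq_decide]
  exact hf a ha b hb

lemma map_eraseIdx {α β : Type*} (f : α → β) :
    ∀ (l : List α) (k : ℕ), (l.map f).eraseIdx k = (l.eraseIdx k).map f := by
  intro l
  induction l with
  | nil => intro k; simp
  | cons x t ih =>
    intro k
    cases k with
    | zero => simp
    | succ m => simp [ih m]

/-- Erasing an entry commutes with standardizing: the key fact. -/
lemma std_eraseIdx_std (u : List ℕ) (k : ℕ) :
    std ((std u).eraseIdx k) = std (u.eraseIdx k) := by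
  rw [std_eq_map_stdFun u, map_eraseIdx]
  exact std_map _ _ (fun a ha b hb =>
    stdFun_lt_iff (List.mem_of_mem_eraseIdx ha) (List.mem_of_mem_eraseIdx hb))

lemma filter_range'_length {n a : ℕ} (ha : 1 ≤ a) (han : a ≤ n + 1) :
    ((List.range' 1 n).filter (fun b => b < a)).length = a - 1 := by
  induction n with
  | zero => interval_cases a <;> simp
  | succ m ih =>
    rw [List.range'_concat]
    rw [List.filter_append, List.length_append]
    rcases Nat.lt_or_ge a (m + 2) with h | h
    · have ham : a ≤ m + 1 := by omega
      rw [ih ham]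
      have h2 : ¬ (1 + 1 * m < a) := by omega
      simp [h2]
      omega
    · have ha' : a = m + 2 := by omega
      subst ha'
      have h1 : (List.range' 1 m).filter (fun b => b < m + 2) = List.range' 1 m := by
        rw [List.filter_eq_self]
        intro b hb
        have := List.mem_range'_1.1 hb
        simpa using by omega
      have h2 : 1 + m < m + 2 := by omega
      rw [h1]
      simp [h2]

/-- A permutation word is already standardized. -/
lemma std_perm (n : ℕ) (w : List ℕ) (hperm : w.Perm (List.range' 1 n)) : std w = w := by
  rw [std_eq_map_stdFun]
  conv_rhs => rw [← List.map_id w]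
  refine List.map_congr_left ?_
  intro a ha
  have ha' : a ∈ List.range' 1 n := hperm.mem_iff.1 ha
  obtain ⟨h1, h2⟩ := List.mem_range'_1.1 ha'
  have hcount : (w.filter (fun b => b < a)).length
      = ((List.range' 1 n).filter (fun b => b < a)).length :=
    (hperm.filter _).length_eq
  have hfin : ((List.range' 1 n).filter (fun b => b < a)).length = a - 1 :=
    filter_range'_length h1 (by omega)
  simp only [stdFun, id]
  rw [hcount, hfin]
  omega

theorem frontBack_std_and_AW_eq_MR (K : Type) [Field K] (n : ℕ) (w : List ℕ)
    (hw : w.length = n) (hperm : w.Perm (List.range' 1 n)) :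
    (∀ j ≤ n, topFace^[n - j] w = std (w.take j) ∧ botFace^[j] w = std (w.drop j)) ∧
    (∑ j ∈ Finset.range (n + 1),
        (Finsupp.single (topFace^[n - j] w) (1 : K)) ⊗ₜ[K]
          (Finsupp.single (botFace^[j] w) (1 : K))
      = ∑ j ∈ Finset.range (n + 1),
        (Finsupp.single (std (w.take j)) (1 : K)) ⊗ₜ[K]
          (Finsupp.single (std (w.drop j)) (1 : K))) := by
  have hstdw : std w = w := std_perm n w hperm
  have htop : ∀ k ≤ n, topFace^[k] w = std (w.take (n - k)) := by
    intro k hk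
    induction k with
    | zero =>
      rw [Function.iterate_zero_apply, Nat.sub_zero, ← hw, List.take_length]
      exact hstdw.symm
    | succ m ih =>
      have hm : m ≤ n := by omega
      rw [Function.iterate_succ_apply', ih hm]
      unfold topFace
      set u := w.take (n - m) with hu
      have hul : u.length = n - m := by simp [hu, hw]
      rw [std_length, hul, std_eraseIdx_std]
      have herase : u.eraseIdx (n - m - 1) = w.take (n - (m + 1)) := by
        rw [← List.dropLast_eq_eraseIdx (by omega), List.dropLast_eq_take, hul,
          hu, List.take_take]
        congr 1
        omega
      rw [herase]
  have hbot : ∀ j, botFace^[j] w = std (w.drop j) := by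
    intro j
    induction j with
    | zero => simpa using hstdw.symm
    | succ m ih =>
      rw [Function.iterate_succ_apply', ih]
      unfold botFace
      rw [std_eraseIdx_std, List.eraseIdx_zero, List.tail_drop]
  have hmain : ∀ j ≤ n, topFace^[n - j] w = std (w.take j) ∧ botFace^[j] w = std (w.drop j) := by
    intro j hj
    refine ⟨?_, hbot j⟩
    have := htop (n - j) (by omega)
    rwa [Nat.sub_sub_self hj] at this
  refine ⟨hmain, ?_⟩
  refine Finset.sum_congr rfl ?_
  intro j hj
  have hj' : j ≤ n := by
    simpa [Nat.lt_succ_iff] using Finset.mem_range.1 hj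
  obtain ⟨h1, h2⟩ := hmain j hj'
  rw [h1, h2]
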